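/- For fixed z with 0 ≤ |z| < 1, the normalized incomplete Gamma function satisfies lim_{N→∞} Γ(N, N|z|²)/Γ(N) = 1, where Γ(N,x) is the upper incomplete Gamma function. Equivalently, lim_{N→∞} e^{-N|z|²} Σ_{k=0}^{N-1} (N|z|²)^k/k! = 1. -/

import Mathlib

open Filter

theorem incGamma_ratio_tendsto_one (z : ℂ) (hz : ‖z‖ < 1) :
    Tendsto (fun N : ℕ =>
        Real.exp (-(N * ‖z‖ ^ 2)) *
          ∑ k ∈ Finset.range N, (N * ‖z‖ ^ 2) ^ k / (Nat.factorial k))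
      atTop (nhds 1) := by
  set a : ℝ := ‖z‖ ^ 2 with ha
  have ha0 : 0 ≤ a := by positivity
  have ha1 : a < 1 := by
    have := norm_nonneg z
    calc a = ‖z‖ ^ 2 := rfl
    _ < 1 := by nlinarith
  set r : ℝ := a * Real.exp (1 - a) with hrdef
  have hr0 : 0 ≤ r := by positivity
  have hr1 : r < 1 := by
    have h1 : a < Real.exp (a - 1) := by
      have := Real.add_one_lt_exp (x := a - 1) (by intro h; nlinarith [sub_eq_zero.mp h])
      linarith
    calc r < Real.exp (a - 1) * Real.exp (1 - a) :=
          mul_lt_mul_of_pos_right h1 (Real.exp_pos _)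
      _ = 1 := by rw [← Real.exp_add]; ring_nf; exact Real.exp_zero
  have h1a : (0:ℝ) < 1 - a := by linarith
  -- upper bound
  have hub : ∀ N : ℕ, Real.exp (-(N * a)) * ∑ k ∈ Finset.range N, (N * a) ^ k / (Nat.factorial k) ≤ 1 := by
    intro N
    have hx : (0:ℝ) ≤ N * a := by positivity
    have := Real.sum_le_exp_of_nonneg hx N
    calc Real.exp (-(N * a)) * ∑ k ∈ Finset.range N, (N * a) ^ k / (Nat.factorial k)
        ≤ Real.exp (-(N * a)) * Real.exp (N * a) :=
          mul_le_mul_of_nonneg_left this (Real.exp_pos _).le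
      _ = 1 := by rw [← Real.exp_add]; simp
  -- lower bound for N ≥ 1
  have hlb : ∀ N : ℕ, 1 ≤ N →
      1 - r ^ N * (1 - a)⁻¹ ≤
        Real.exp (-(N * a)) * ∑ k ∈ Finset.range N, (N * a) ^ k / (Nat.factorial k) := by
    intro N hN
    set x : ℝ := N * a with hxdef
    have hx : (0:ℝ) ≤ x := by positivity
    have hsum : Summable (fun k : ℕ => x ^ k / (Nat.factorial k : ℝ)) :=
      Real.summable_pow_div_factorial x
    have hexp : Real.exp x = ∑' k : ℕ, x ^ k / (Nat.factorial k : ℝ) := by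
      rw [Real.exp_eq_exp_ℝ, NormedSpace.exp_eq_tsum_div]
    have htail : Real.exp x - ∑ k ∈ Finset.range N, x ^ k / (Nat.factorial k : ℝ)
        = ∑' k : ℕ, x ^ (k + N) / (Nat.factorial (k + N) : ℝ) := by
      rw [hexp, ← Summable.sum_add_tsum_nat_add N hsum]; ring
    -- termwise bound
    have hterm : ∀ k : ℕ, x ^ (k + N) / (Nat.factorial (k + N) : ℝ)
        ≤ (a ^ N * Real.exp N) * a ^ k := by
      intro k
      have hNpos : (0:ℝ) < N := by exact_mod_cast hN
      have hfact : (Nat.factorial N : ℝ) * (N:ℝ) ^ k ≤ (Nat.factorial (k + N) : ℝ) := by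
        have h1 : Nat.factorial N * N ^ k ≤ Nat.factorial (N + k) := by
          calc Nat.factorial N * N ^ k ≤ Nat.factorial N * (N + 1) ^ k :=
                Nat.mul_le_mul_left _ (Nat.pow_le_pow_left (Nat.le_succ N) k)
            _ ≤ Nat.factorial (N + k) := Nat.factorial_mul_pow_le_factorial
        rw [Nat.add_comm k N]
        exact_mod_cast h1
      have hxpow : x ^ (k + N) = (N:ℝ) ^ (k + N) * a ^ (k + N) := by
        rw [hxdef, mul_pow]
      have hfpos : (0:ℝ) < (Nat.factorial (k + N) : ℝ) := by
        exact_mod_cast Nat.factorial_pos _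
      have hNfpos : (0:ℝ) < (Nat.factorial N : ℝ) := by
        exact_mod_cast Nat.factorial_pos _
      have hstep : x ^ (k + N) / (Nat.factorial (k + N) : ℝ)
          ≤ ((N:ℝ) ^ N / Nat.factorial N) * (a ^ N * a ^ k) := by
        rw [hxpow, div_le_iff₀ hfpos]
        have : (N:ℝ) ^ (k + N) * a ^ (k + N)
            = ((N:ℝ) ^ N / Nat.factorial N) * (a ^ N * a ^ k) * ((Nat.factorial N : ℝ) * (N:ℝ) ^ k) := by
          field_simp
          ring
        rw [this]
        apply mul_le_mul_of_nonneg_left hfact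
        positivity
      have hNN : ((N:ℝ) ^ N / Nat.factorial N) ≤ Real.exp N :=
        Real.pow_div_factorial_le_exp (x := (N:ℝ)) (Nat.cast_nonneg N) N
      calc x ^ (k + N) / (Nat.factorial (k + N) : ℝ)
          ≤ ((N:ℝ) ^ N / Nat.factorial N) * (a ^ N * a ^ k) := hstep
        _ ≤ Real.exp N * (a ^ N * a ^ k) := by
            apply mul_le_mul_of_nonneg_right hNN; positivity
        _ = (a ^ N * Real.exp N) * a ^ k := by ring
    -- sum the bound
    have hgeom : Summable (fun k : ℕ => (a ^ N * Real.exp N) * a ^ k) :=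
      (summable_geometric_of_lt_one ha0 ha1).mul_left _
    have hsumtail : Summable (fun k : ℕ => x ^ (k + N) / (Nat.factorial (k + N) : ℝ)) :=
      (summable_nat_add_iff N).mpr hsum
    have htsum_le : (∑' k : ℕ, x ^ (k + N) / (Nat.factorial (k + N) : ℝ))
        ≤ a ^ N * Real.exp N * (1 - a)⁻¹ := by
      calc (∑' k : ℕ, x ^ (k + N) / (Nat.factorial (k + N) : ℝ))
          ≤ ∑' k : ℕ, (a ^ N * Real.exp N) * a ^ k :=
            Summable.tsum_le_tsum hterm hsumtail hgeom
        _ = (a ^ N * Real.exp N) * ∑' k : ℕ, a ^ k := tsum_mul_left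
        _ = a ^ N * Real.exp N * (1 - a)⁻¹ := by
            rw [tsum_geometric_of_lt_one ha0 ha1]
    -- combine
    have hkey : Real.exp x - ∑ k ∈ Finset.range N, x ^ k / (Nat.factorial k : ℝ)
        ≤ a ^ N * Real.exp N * (1 - a)⁻¹ := htail ▸ htsum_le
    have hrN : Real.exp x * r ^ N = a ^ N * Real.exp N := by
      rw [hrdef, mul_pow, ← Real.exp_nat_mul]
      rw [show Real.exp x * (a ^ N * Real.exp (N * (1 - a)))
            = a ^ N * (Real.exp x * Real.exp (N * (1 - a))) from by ring,
        ← Real.exp_add, show x + N * (1 - a) = (N:ℝ) from by rw [hxdef]; ring]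
    have hexppos : (0:ℝ) < Real.exp x := Real.exp_pos _
    have h2 : Real.exp x * (1 - r ^ N * (1 - a)⁻¹)
        ≤ ∑ k ∈ Finset.range N, x ^ k / (Nat.factorial k : ℝ) := by
      have : Real.exp x * (1 - r ^ N * (1 - a)⁻¹)
          = Real.exp x - (Real.exp x * r ^ N) * (1 - a)⁻¹ := by ring
      rw [this, hrN]
      linarith [hkey]
    calc 1 - r ^ N * (1 - a)⁻¹
        = Real.exp (-x) * (Real.exp x * (1 - r ^ N * (1 - a)⁻¹)) := by
          rw [← mul_assoc, ← Real.exp_add]; simp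
      _ ≤ Real.exp (-x) * ∑ k ∈ Finset.range N, x ^ k / (Nat.factorial k : ℝ) :=
          mul_le_mul_of_nonneg_left h2 (Real.exp_pos _).le
  -- squeeze
  have hlim : Tendsto (fun N : ℕ => 1 - r ^ N * (1 - a)⁻¹) atTop (nhds 1) := by
    have := (tendsto_pow_atTop_nhds_zero_of_lt_one hr0 hr1).mul_const (1 - a)⁻¹
    have h := (tendsto_const_nhds (x := (1:ℝ)) (f := atTop)).sub this
    simpa using h
  refine tendsto_of_tendsto_of_tendsto_of_le_of_le' hlim tendsto_const_nhds ?_ ?_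
  · filter_upwards [eventually_ge_atTop 1] with N hN using hlb N hN
  · filter_upwards with N using hub N
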